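/- Let f be a polynomial with coefficients in ℤ_2. Then the dynamical system (ℤ_2, f) is minimal (all orbits dense) if and only if the induced map f_{/3} on ℤ/8ℤ is minimal (has a full cycle of length 8). -/

import Mathlib

open Polynomial

section Dyn

variable {α : Type*} [Fintype α] [DecidableEq α] (σ : α → α)
  (hσ : ∀ a : α, Set.range (fun k : ℕ => σ^[k] a) = Set.univ)

include hσ

omit [Fintype α] [DecidableEq α] in
lemma sigma_surj : Function.Surjective σ := by
  intro b
  have h : b ∈ Set.range (fun k : ℕ => σ^[k] (σ b)) := by rw [hσ (σ b)]; trivial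
  obtain ⟨k, hk⟩ := h
  refine ⟨σ^[k] b, ?_⟩
  have h2 : σ^[k] (σ b) = σ (σ^[k] b) := by
    rw [← Function.iterate_succ_apply, Function.iterate_succ_apply']
  rw [← h2]; exact hk

omit [DecidableEq α] in
lemma sigma_bij : Function.Bijective σ :=
  ⟨(Finite.injective_iff_surjective).2 (sigma_surj σ hσ), sigma_surj σ hσ⟩

/-- any positive period is at least the cardinality -/
lemma card_le_period (a : α) (T : ℕ) (hT : 0 < T) (h : σ^[T] a = a) :
    Fintype.card α ≤ T := by
  have hcov : ∀ b : α, b ∈ (Finset.range T).image (fun k => σ^[k] a) := by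
    intro b
    have hb : b ∈ Set.range (fun k : ℕ => σ^[k] a) := by rw [hσ a]; trivial
    obtain ⟨k, hk⟩ := hb
    have hper : σ^[k % T] a = σ^[k] a :=
      Function.IsPeriodicPt.iterate_mod_apply h k
    exact Finset.mem_image.2 ⟨k % T, Finset.mem_range.2 (Nat.mod_lt _ hT), by rw [hper]; exact hk⟩
  calc Fintype.card α = Finset.univ.card := rfl
    _ ≤ ((Finset.range T).image (fun k => σ^[k] a)).card :=
        Finset.card_le_card (fun b _ => hcov b)
    _ ≤ (Finset.range T).card := Finset.card_image_le
    _ = T := Finset.card_range T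

/-- the orbit has full period: σ^[card α] a = a -/
lemma full_cycle (a : α) : σ^[Fintype.card α] a = a := by
  have hinj : Function.Injective σ := (sigma_bij σ hσ).1
  have hex : ∃ t : ℕ, 0 < t ∧ σ^[t] a = a := by
    obtain ⟨i, j, hne, hij⟩ := Finite.exists_ne_map_eq_of_infinite (fun k : ℕ => σ^[k] a)
    rcases hne.lt_or_gt with hlt | hlt
    · refine ⟨j - i, Nat.sub_pos_of_lt hlt, ?_⟩
      have : σ^[i] (σ^[j-i] a) = σ^[i] a := by
        rw [← Function.iterate_add_apply, Nat.add_sub_cancel' hlt.le]; exact hij.symm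
      exact hinj.iterate i this
    · refine ⟨i - j, Nat.sub_pos_of_lt hlt, ?_⟩
      have : σ^[j] (σ^[i-j] a) = σ^[j] a := by
        rw [← Function.iterate_add_apply, Nat.add_sub_cancel' hlt.le]; exact hij
      exact hinj.iterate j this
  classical
  let T := Nat.find hex
  have hT : 0 < T ∧ σ^[T] a = a := Nat.find_spec hex
  have hmin : ∀ t, 0 < t → t < T → σ^[t] a ≠ a := fun t h1 h2 h3 =>
    Nat.find_min hex h2 ⟨h1, h3⟩
  have hinjOn : ∀ i j, i < T → j < T → σ^[i] a = σ^[j] a → i = j := by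
    intro i j hi hj hijeq
    by_contra hne
    rcases Nat.lt_or_ge i j with hlt | hge
    · exact hmin (j-i) (Nat.sub_pos_of_lt hlt) (lt_of_le_of_lt (Nat.sub_le j i) hj)
        (hinj.iterate i (by
          rw [← Function.iterate_add_apply, Nat.add_sub_cancel' hlt.le]; exact hijeq.symm))
    · have hlt : j < i := lt_of_le_of_ne hge (fun h => hne h.symm)
      exact hmin (i-j) (Nat.sub_pos_of_lt hlt) (lt_of_le_of_lt (Nat.sub_le i j) hi)
        (hinj.iterate j (by
          rw [← Function.iterate_add_apply, Nat.add_sub_cancel' hlt.le]; exact hijeq))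
  have hTcard : T ≤ Fintype.card α := by
    have hI : Function.Injective (fun k : Fin T => σ^[(k:ℕ)] a) := by
      intro i j h
      exact Fin.ext (hinjOn i j i.2 j.2 h)
    simpa using Fintype.card_le_of_injective _ hI
  have hcardT : Fintype.card α ≤ T := card_le_period σ hσ a T hT.1 hT.2
  have hTeq : T = Fintype.card α := le_antisymm hTcard hcardT
  rw [← hTeq]; exact hT.2

end Dyn

namespace Stmt14

instance (n : ℕ) : NeZero (2^n) := ⟨pow_ne_zero n two_ne_zero⟩

noncomputable def fz (F : Polynomial ℤ_[2]) : ℤ_[2] → ℤ_[2] := fun t => F.eval t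

noncomputable def fm (F : Polynomial ℤ_[2]) (n : ℕ) : ZMod (2^n) → ZMod (2^n) :=
  fun a => (F.map (PadicInt.toZModPow n)).eval a

lemma compat (F : Polynomial ℤ_[2]) (n : ℕ) (x : ℤ_[2]) :
    fm F n (PadicInt.toZModPow n x) = PadicInt.toZModPow n (fz F x) := by
  simp [fm, fz, eval_map, eval₂_at_apply]

lemma compat_iter (F : Polynomial ℤ_[2]) (n k : ℕ) (x : ℤ_[2]) :
    (fm F n)^[k] (PadicInt.toZModPow n x) = PadicInt.toZModPow n ((fz F)^[k] x) := by
  induction k with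
  | zero => rfl
  | succ k ih =>
    rw [Function.iterate_succ_apply', Function.iterate_succ_apply', ih, compat]

lemma phi_surj (n : ℕ) (a : ZMod (2^n)) : ∃ x : ℤ_[2], PadicInt.toZModPow n x = a := by
  refine ⟨(a.val : ℤ_[2]), ?_⟩
  rw [map_natCast]
  exact ZMod.natCast_zmod_val a

lemma phi_eq_iff (n : ℕ) (x y : ℤ_[2]) :
    PadicInt.toZModPow n x = PadicInt.toZModPow n y ↔ (2:ℤ_[2])^n ∣ x - y := by
  rw [← sub_eq_zero, ← map_sub, ← RingHom.mem_ker, PadicInt.ker_toZModPow,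
    Ideal.mem_span_singleton]
  norm_num

def Tn (F : Polynomial ℤ_[2]) (n : ℕ) : Prop :=
  ∀ a : ZMod (2^n), Set.range (fun k : ℕ => (fm F n)^[k] a) = Set.univ

/-- kernel of projection ZMod 2^(n+1) → ZMod 2^n -/
lemma ker_proj {n : ℕ} (z : ZMod (2^(n+1)))
    (h : ZMod.castHom (pow_dvd_pow 2 (Nat.le_succ n)) (ZMod (2^n)) z = 0) :
    z = 0 ∨ z = (2^n : ℕ) := by
  have hz : ((z.val : ℕ) : ZMod (2^(n+1))) = z := ZMod.natCast_zmod_val z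
  rw [← hz, map_natCast, ZMod.natCast_eq_zero_iff] at h
  obtain ⟨c, hc⟩ := h
  have hv : z.val < 2^(n+1) := ZMod.val_lt z
  rw [hc] at hv
  have hc2 : c < 2 := by
    by_contra hcon
    push_neg at hcon
    have : 2^(n+1) ≤ 2^n * c := by
      rw [pow_succ]
      exact Nat.mul_le_mul_left _ hcon
    omega
  interval_cases c
  · left; rw [← hz, hc]; simp
  · right; rw [← hz, hc]; simp

lemma proj_phi {m n : ℕ} (h : m ≤ n) (x : ℤ_[2]) :
    ZMod.castHom (pow_dvd_pow 2 h) (ZMod (2^m)) (PadicInt.toZModPow n x) =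
      PadicInt.toZModPow m x :=
  RingHom.ext_iff.1 (PadicInt.zmod_cast_comp_toZModPow m n h) x

lemma proj_fm (F : Polynomial ℤ_[2]) {m n : ℕ} (h : m ≤ n) (a : ZMod (2^n)) :
    ZMod.castHom (pow_dvd_pow 2 h) (ZMod (2^m)) (fm F n a) =
      fm F m (ZMod.castHom (pow_dvd_pow 2 h) (ZMod (2^m)) a) := by
  obtain ⟨x, rfl⟩ := phi_surj n a
  rw [compat, proj_phi h, proj_phi h, compat]

lemma proj_fm_iter (F : Polynomial ℤ_[2]) {m n : ℕ} (h : m ≤ n) (k : ℕ) (a : ZMod (2^n)) :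
    ZMod.castHom (pow_dvd_pow 2 h) (ZMod (2^m)) ((fm F n)^[k] a) =
      (fm F m)^[k] (ZMod.castHom (pow_dvd_pow 2 h) (ZMod (2^m)) a) := by
  induction k with
  | zero => rfl
  | succ k ih =>
    rw [Function.iterate_succ_apply', Function.iterate_succ_apply', proj_fm F h, ih]

lemma Tn_mono (F : Polynomial ℤ_[2]) {m n : ℕ} (h : m ≤ n) (hT : Tn F n) : Tn F m := by
  intro a
  rw [Set.eq_univ_iff_forall]
  intro b
  obtain ⟨x, hx⟩ := phi_surj m a
  obtain ⟨y, hy⟩ := phi_surj m b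
  have hb : PadicInt.toZModPow n y ∈
      Set.range (fun k : ℕ => (fm F n)^[k] (PadicInt.toZModPow n x)) := by
    rw [hT (PadicInt.toZModPow n x)]; trivial
  obtain ⟨k, hk⟩ := hb
  refine ⟨k, ?_⟩
  have h2 := congrArg (ZMod.castHom (pow_dvd_pow 2 h) (ZMod (2^m))) hk
  rw [proj_fm_iter F h, proj_phi h, proj_phi h, hx, hy] at h2
  exact h2

noncomputable def Giter (F : Polynomial ℤ_[2]) : ℕ → Polynomial ℤ_[2]
  | 0 => X
  | (j+1) => F.comp (Giter F j)

lemma Giter_eval (F : Polynomial ℤ_[2]) (j : ℕ) (x : ℤ_[2]) :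
    (Giter F j).eval x = (fz F)^[j] x := by
  induction j with
  | zero => simp [Giter]
  | succ j ih =>
    rw [Giter, eval_comp, ih, Function.iterate_succ_apply']
    rfl

lemma Giter_deriv (F : Polynomial ℤ_[2]) (j : ℕ) (x : ℤ_[2]) :
    (derivative (Giter F (j+1))).eval x =
      (derivative (Giter F j)).eval x * (derivative F).eval ((fz F)^[j] x) := by
  rw [Giter, derivative_comp, eval_mul, eval_comp, Giter_eval]

lemma sec_deriv_even (P : Polynomial ℤ_[2]) (x : ℤ_[2]) :
    (2:ℤ_[2]) ∣ (derivative (derivative P)).eval x := by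
  have key : derivative (derivative (P.map (PadicInt.toZModPow 1))) = 0 := by
    ext n
    rw [coeff_derivative, coeff_derivative, coeff_zero]
    rcases Nat.even_or_odd n with he | ho
    · have h0 : ((n + 1 + 1 : ℕ) : ZMod (2^1)) = 0 := by
        rw [ZMod.natCast_eq_zero_iff]
        obtain ⟨k, hk⟩ := he
        omega
      push_cast at h0 ⊢
      rw [h0]; ring
    · have h0 : ((n + 1 : ℕ) : ZMod (2^1)) = 0 := by
        rw [ZMod.natCast_eq_zero_iff]
        obtain ⟨k, hk⟩ := ho
        omega
      push_cast at h0 ⊢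
      rw [h0]; ring
  have h2 : PadicInt.toZModPow 1 ((derivative (derivative P)).eval x) = 0 := by
    rw [← eval₂_at_apply, ← eval_map,
      show (derivative (derivative P)).map (PadicInt.toZModPow 1) =
        derivative (derivative (P.map (PadicInt.toZModPow 1))) from by
          rw [derivative_map, derivative_map], key]
    simp
  have h3 : (derivative (derivative P)).eval x ∈ RingHom.ker (PadicInt.toZModPow (p := 2) 1) :=
    RingHom.mem_ker.mpr h2
  rw [PadicInt.ker_toZModPow, Ideal.mem_span_singleton] at h3
  simpa using h3

lemma deriv_mod4 (F : Polynomial ℤ_[2]) (x t : ℤ_[2]) :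
    (4:ℤ_[2]) ∣ (derivative F).eval (x + 2*t) - (derivative F).eval x := by
  obtain ⟨c, hc⟩ := (derivative F).binomExpansion x (2*t)
  obtain ⟨w, hw⟩ := sec_deriv_even F x
  refine ⟨w*t + c*t^2, ?_⟩
  rw [hc, hw]; ring

lemma parity (F : Polynomial ℤ_[2]) (hT1 : Tn F 1) (x : ℤ_[2]) :
    PadicInt.toZModPow 1 (fz F x) = PadicInt.toZModPow 1 x + 1 := by
  have hstep : ∀ b : ZMod (2^1), fm F 1 b = b + 1 := by
    intro b
    have hne : fm F 1 b ≠ b := by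
      intro heq
      have hfix : ∀ k : ℕ, (fm F 1)^[k] b = b := fun k => Function.iterate_fixed heq k
      have hmem : b + 1 ∈ Set.range (fun k : ℕ => (fm F 1)^[k] b) := by rw [hT1 b]; trivial
      obtain ⟨k, hk⟩ := hmem
      have hk2 : (fm F 1)^[k] b = b + 1 := hk
      rw [hfix k] at hk2
      have hk' : b = b + 1 := hk2
      exact (by decide : ∀ b : ZMod (2^1), b ≠ b + 1) b hk'
    exact (by decide : ∀ u v : ZMod (2^1), u ≠ v → u = v + 1) _ b hne
  rw [← compat, hstep]

lemma parity_iter (F : Polynomial ℤ_[2]) (hT1 : Tn F 1) (k : ℕ) (x : ℤ_[2]) :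
    PadicInt.toZModPow 1 ((fz F)^[k] x) = PadicInt.toZModPow 1 x + (k : ZMod (2^1)) := by
  induction k with
  | zero => simp
  | succ k ih =>
    rw [Function.iterate_succ_apply', parity F hT1, ih]
    push_cast
    ring

lemma deriv_odd (F : Polynomial ℤ_[2]) (hT2 : Tn F 2) (x : ℤ_[2]) :
    ¬ (2:ℤ_[2]) ∣ (derivative F).eval x := by
  rintro ⟨w, hw⟩
  obtain ⟨c, hc⟩ := F.binomExpansion x 2
  have h4 : PadicInt.toZModPow 2 (fz F (x + 2)) = PadicInt.toZModPow 2 (fz F x) := by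
    rw [phi_eq_iff]
    refine ⟨w + c, ?_⟩
    show F.eval (x+2) - F.eval x = 2^2 * (w + c)
    rw [hc, hw]; ring
  have hinj := (sigma_bij (fm F 2) hT2).1
  have h5 : fm F 2 (PadicInt.toZModPow 2 x + 2) = fm F 2 (PadicInt.toZModPow 2 x) := by
    have hx2 : PadicInt.toZModPow 2 (x+2) = PadicInt.toZModPow 2 x + 2 := by
      rw [map_add, map_ofNat]
    rw [← hx2, compat, compat, h4]
  have h6 := hinj h5
  have h7 : (2 : ZMod (2^2)) = 0 := add_eq_left.1 h6
  exact (by decide : (2 : ZMod (2^2)) ≠ 0) h7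

lemma halfstep (F : Polynomial ℤ_[2]) (m : ℕ) (hTm1 : Tn F (m+1)) (x : ℤ_[2]) :
    PadicInt.toZModPow (m+1) ((fz F)^[2^m] x) =
      PadicInt.toZModPow (m+1) x + (2^m : ℕ) := by
  have hTm : Tn F m := Tn_mono F (Nat.le_succ m) hTm1
  set π := ZMod.castHom (pow_dvd_pow 2 (Nat.le_succ m)) (ZMod (2^m)) with hπdef
  set a := PadicInt.toZModPow (m+1) x with ha
  have hb : (fm F (m+1))^[2^m] a = PadicInt.toZModPow (m+1) ((fz F)^[2^m] x) :=
    compat_iter F (m+1) (2^m) x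
  set b := (fm F (m+1))^[2^m] a with hbdef
  have hπb : π b = π a := by
    rw [hbdef, proj_fm_iter F (Nat.le_succ m)]
    have hcard : Fintype.card (ZMod (2^m)) = 2^m := ZMod.card _
    have hfc := full_cycle (fm F m) hTm (π a)
    rw [hcard] at hfc
    exact hfc
  have h0 : π (b - a) = 0 := by rw [map_sub, hπb, sub_self]
  rcases ker_proj (b - a) h0 with h1 | h1
  · exfalso
    have hba : b = a := by rw [← sub_eq_zero]; exact h1
    have hcard : Fintype.card (ZMod (2^(m+1))) = 2^(m+1) := ZMod.card _
    have hle := card_le_period (fm F (m+1)) hTm1 a (2^m)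
      (Nat.pow_pos (by norm_num)) (by rw [← hbdef]; exact hba)
    rw [hcard, pow_succ] at hle
    have hpos : 0 < 2^m := Nat.pow_pos (by norm_num)
    omega
  · have hba : b = a + (2^m : ℕ) := by rw [← h1]; ring
    rw [← hb]
    exact hba

lemma par4 (F : Polynomial ℤ_[2]) (y z : ℤ_[2])
    (h : PadicInt.toZModPow 1 y = PadicInt.toZModPow 1 z) :
    PadicInt.toZModPow 2 ((derivative F).eval y) =
      PadicInt.toZModPow 2 ((derivative F).eval z) := by
  rw [phi_eq_iff] at h ⊢
  obtain ⟨t, ht⟩ := h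
  rw [pow_one] at ht
  have hy : y = z + 2 * t := by rw [← ht]; ring
  obtain ⟨d, hd⟩ := deriv_mod4 F z t
  refine ⟨d, ?_⟩
  rw [hy, hd]
  norm_num

lemma Dprod (F : Polynomial ℤ_[2]) (hT1 : Tn F 1) (j : ℕ) (x : ℤ_[2]) :
    PadicInt.toZModPow 2 ((derivative (Giter F (2*j))).eval x) =
      (PadicInt.toZModPow 2 ((derivative F).eval x) *
       PadicInt.toZModPow 2 ((derivative F).eval (fz F x)))^j := by
  induction j with
  | zero => simp [Giter]
  | succ j ih =>
    have e1 : 2*(j+1) = (2*j + 1) + 1 := by ring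
    rw [e1, Giter_deriv, Giter_deriv, map_mul, map_mul, ih]
    have hcast : ((2*j : ℕ) : ZMod (2^1)) = 0 := by
      rw [ZMod.natCast_eq_zero_iff]
      omega
    have p1 : PadicInt.toZModPow 2 ((derivative F).eval ((fz F)^[2*j] x)) =
        PadicInt.toZModPow 2 ((derivative F).eval x) := by
      apply par4 F
      rw [parity_iter F hT1, hcast, add_zero]
    have p2 : PadicInt.toZModPow 2 ((derivative F).eval ((fz F)^[2*j+1] x)) =
        PadicInt.toZModPow 2 ((derivative F).eval (fz F x)) := by
      apply par4 F
      rw [Function.iterate_succ_apply, parity_iter F hT1, hcast, add_zero]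
    rw [p1, p2]
    ring

lemma unit_sq (z : ZMod (2^2))
    (h : ZMod.castHom (pow_dvd_pow 2 (Nat.le_succ 1)) (ZMod (2^1)) z = 1) : z^2 = 1 := by
  have h0 : ZMod.castHom (pow_dvd_pow 2 (Nat.le_succ 1)) (ZMod (2^1)) (z - 1) = 0 := by
    rw [map_sub, h, map_one, sub_self]
  rcases ker_proj (z - 1) h0 with h1 | h1
  · have hz : z = 1 := by rw [← sub_eq_zero]; exact h1
    rw [hz]; norm_num
  · have hz : z = 1 + (2^1 : ℕ) := by rw [← h1]; ring
    rw [hz]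
    decide

lemma phi1_ne_zero (w : ℤ_[2]) (h : ¬ (2:ℤ_[2]) ∣ w) : PadicInt.toZModPow 1 w ≠ 0 := by
  intro h0
  apply h
  have : PadicInt.toZModPow 1 w = PadicInt.toZModPow 1 0 := by rw [map_zero]; exact h0
  rw [phi_eq_iff] at this
  simpa using this

lemma Dfull (F : Polynomial ℤ_[2]) (hT1 : Tn F 1) (hT2 : Tn F 2) (m : ℕ) (hm : 2 ≤ m)
    (x : ℤ_[2]) :
    PadicInt.toZModPow 2 ((derivative (Giter F (2^m))).eval x) = 1 := by
  have hsplit : 2^m = 2 * 2^(m-1) := by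
    conv_lhs => rw [show m = (m-1)+1 by omega]
    rw [pow_succ, mul_comm]
  rw [hsplit, Dprod F hT1]
  set z := PadicInt.toZModPow 2 ((derivative F).eval x) *
      PadicInt.toZModPow 2 ((derivative F).eval (fz F x)) with hzdef
  have hz1 : ZMod.castHom (pow_dvd_pow 2 (Nat.le_succ 1)) (ZMod (2^1)) z = 1 := by
    rw [hzdef, map_mul, proj_phi (Nat.le_succ 1), proj_phi (Nat.le_succ 1)]
    have n1 := phi1_ne_zero _ (deriv_odd F hT2 x)
    have n2 := phi1_ne_zero _ (deriv_odd F hT2 (fz F x))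
    exact (by decide : ∀ u v : ZMod (2^1), u ≠ 0 → v ≠ 0 → u * v = 1) _ _ n1 n2
  have hsq : z^2 = 1 := unit_sq z hz1
  have h2 : 2^(m-1) = 2 * 2^(m-2) := by
    conv_lhs => rw [show m - 1 = (m-2)+1 by omega]
    rw [pow_succ, mul_comm]
  rw [h2, pow_mul, hsq, one_pow]

lemma key_step (F : Polynomial ℤ_[2]) (m : ℕ) (hm : 2 ≤ m) (hTm1 : Tn F (m+1)) (x : ℤ_[2]) :
    PadicInt.toZModPow (m+2) ((fz F)^[2^(m+1)] x) =
      PadicInt.toZModPow (m+2) x + ((2^(m+1) : ℕ) : ZMod (2^(m+2))) := by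
  have hT1 : Tn F 1 := Tn_mono F (by omega) hTm1
  have hT2 : Tn F 2 := Tn_mono F (by omega) hTm1
  have hh := halfstep F m hTm1 x
  have hd : (2:ℤ_[2])^(m+1) ∣ (fz F)^[2^m] x - (x + ((2^m : ℕ) : ℤ_[2])) := by
    rw [← phi_eq_iff, hh, map_add, map_natCast]
  obtain ⟨w, hw⟩ := hd
  set u : ℤ_[2] := 1 + 2*w with hu
  have hfu : (fz F)^[2^m] x = x + 2^m * u := by
    have hcast : ((2^m:ℕ):ℤ_[2]) = 2^m := by push_cast; ring
    rw [sub_eq_iff_eq_add] at hw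
    rw [hw, hcast, hu]
    ring
  obtain ⟨c, hc⟩ := (Giter F (2^m)).binomExpansion x (2^m * u)
  have hD : (2:ℤ_[2])^2 ∣ (derivative (Giter F (2^m))).eval x - 1 := by
    rw [← phi_eq_iff, map_one]
    exact Dfull F hT1 hT2 m hm x
  obtain ⟨d, hdd⟩ := hD
  set D := (derivative (Giter F (2^m))).eval x with hDdef
  have hD1 : D = 1 + 4*d := by
    rw [sub_eq_iff_eq_add] at hdd
    rw [hdd]; ring
  have h2sum : 2^(m+1) = 2^m + 2^m := by rw [pow_succ]; omega
  have hiter : (fz F)^[2^(m+1)] x = (Giter F (2^m)).eval ((fz F)^[2^m] x) := by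
    rw [Giter_eval, ← Function.iterate_add_apply, ← h2sum]
  set M := (2:ℤ_[2])^(m-2) with hM
  have e0 : (2:ℤ_[2])^m = 4*M := by
    rw [show (4:ℤ_[2]) = 2^2 by norm_num, hM, ← pow_add]
    congr 1
    omega
  have e1 : (2:ℤ_[2])^(m+1) = 8*M := by
    rw [pow_succ, e0]; ring
  have e2 : (2:ℤ_[2])^(m+2) = 16*M := by
    rw [pow_succ, e1]; ring
  have hfinal : (2:ℤ_[2])^(m+2) ∣ (fz F)^[2^(m+1)] x - (x + ((2^(m+1):ℕ):ℤ_[2])) := by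
    have hp1 : ((2^(m+1):ℕ):ℤ_[2]) = 2^(m+1) := by push_cast; ring
    refine ⟨w + d*u + M * c * u^2, ?_⟩
    rw [hiter, hfu, hc, Giter_eval, hfu, hD1, hp1, e0, e1, e2, hu]
    ring
  have hφ := (phi_eq_iff (m+2) ((fz F)^[2^(m+1)] x) (x + ((2^(m+1):ℕ):ℤ_[2]))).2 hfinal
  rw [hφ, map_add, map_natCast]

lemma Tn_step (F : Polynomial ℤ_[2]) (m : ℕ) (hm : 2 ≤ m) (hTm1 : Tn F (m+1)) :
    Tn F (m+2) := by
  have hper : ∀ a : ZMod (2^(m+2)),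
      (fm F (m+2))^[2^(m+1)] a = a + ((2^(m+1) : ℕ) : ZMod (2^(m+2))) := by
    intro a
    obtain ⟨y, rfl⟩ := phi_surj (m+2) a
    rw [compat_iter, key_step F m hm hTm1]
  intro a
  rw [Set.eq_univ_iff_forall]
  intro b
  set π := ZMod.castHom (pow_dvd_pow 2 (Nat.le_succ (m+1))) (ZMod (2^(m+1))) with hπ
  have hmem : π b ∈ Set.range (fun k : ℕ => (fm F (m+1))^[k] (π a)) := by
    rw [hTm1 (π a)]; trivial
  obtain ⟨k, hk⟩ := hmem
  have hπc : π ((fm F (m+2))^[k] a) = π b := by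
    rw [hπ, proj_fm_iter F (Nat.le_succ (m+1))]
    exact hk
  have h0 : π ((fm F (m+2))^[k] a - b) = 0 := by rw [map_sub, hπc, sub_self]
  rcases ker_proj _ h0 with h1 | h1
  · refine ⟨k, ?_⟩
    show (fm F (m+2))^[k] a = b
    rw [← sub_eq_zero]
    exact h1
  · refine ⟨2^(m+1) + k, ?_⟩
    show (fm F (m+2))^[2^(m+1) + k] a = b
    rw [Function.iterate_add_apply, hper]
    rw [sub_eq_iff_eq_add] at h1
    rw [h1]
    have hzero : ((2^(m+1):ℕ) : ZMod (2^(m+2))) + ((2^(m+1):ℕ) : ZMod (2^(m+2))) = 0 := by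
      rw [← Nat.cast_add, show 2^(m+1) + 2^(m+1) = 2^(m+2) by rw [pow_succ 2 (m+1)]; omega]
      exact ZMod.natCast_self _
    rw [add_comm ((2^(m+1):ℕ) : ZMod (2^(m+2))) b, add_assoc, hzero, add_zero]

lemma T3_all (F : Polynomial ℤ_[2]) (h3 : Tn F 3) : ∀ n, Tn F n := by
  have hstep : ∀ n, 3 ≤ n → Tn F n → Tn F (n+1) := by
    intro n hn hT
    obtain ⟨m, rfl⟩ : ∃ m, n = m + 1 := ⟨n - 1, by omega⟩
    exact Tn_step F m (by omega) hT
  intro n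
  rcases le_or_gt n 3 with h | h
  · exact Tn_mono F h h3
  · have hind : ∀ k, Tn F (3 + k) := by
      intro k
      induction k with
      | zero => exact h3
      | succ k ih => exact hstep (3+k) (by omega) ih
    have := hind (n - 3)
    rwa [show 3 + (n-3) = n by omega] at this

lemma dense_to_Tn (F : Polynomial ℤ_[2])
    (hdense : ∀ x : ℤ_[2], Dense (Set.range fun k : ℕ => (fz F)^[k] x)) (n : ℕ) :
    Tn F n := by
  intro a
  rw [Set.eq_univ_iff_forall]
  intro b
  obtain ⟨x, rfl⟩ := phi_surj n a
  obtain ⟨y, rfl⟩ := phi_surj n b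
  have h := Metric.dense_iff.1 (hdense x) y (((2:ℕ):ℝ)^(-(n:ℤ))) (by positivity)
  obtain ⟨z, hzb, k, hk⟩ := h
  have hk' : (fz F)^[k] x = z := hk
  have hdist : ‖(fz F)^[k] x - y‖ ≤ ((2:ℕ):ℝ)^(-(n:ℤ)) := by
    rw [← dist_eq_norm, hk']
    exact le_of_lt (Metric.mem_ball.1 hzb)
  rw [PadicInt.norm_le_pow_iff_mem_span_pow, Ideal.mem_span_singleton] at hdist
  have hdvd : (2:ℤ_[2])^n ∣ (fz F)^[k] x - y := by exact_mod_cast hdist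
  refine ⟨k, ?_⟩
  show (fm F n)^[k] (PadicInt.toZModPow n x) = PadicInt.toZModPow n y
  rw [compat_iter]
  exact (phi_eq_iff n _ y).2 hdvd

lemma Tn_to_dense (F : Polynomial ℤ_[2]) (hT : ∀ n, Tn F n) (x : ℤ_[2]) :
    Dense (Set.range fun k : ℕ => (fz F)^[k] x) := by
  rw [Metric.dense_iff]
  intro y r hr
  obtain ⟨n, hn⟩ := PadicInt.exists_pow_neg_lt 2 hr
  have hmem : PadicInt.toZModPow n y ∈
      Set.range (fun k : ℕ => (fm F n)^[k] (PadicInt.toZModPow n x)) := by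
    rw [hT n _]; trivial
  obtain ⟨k, hk⟩ := hmem
  have heq : PadicInt.toZModPow n ((fz F)^[k] x) = PadicInt.toZModPow n y := by
    rw [← compat_iter]; exact hk
  rw [phi_eq_iff] at heq
  refine ⟨(fz F)^[k] x, Metric.mem_ball.2 ?_, ⟨k, rfl⟩⟩
  rw [dist_eq_norm]
  calc ‖(fz F)^[k] x - y‖ ≤ ((2:ℕ):ℝ)^(-(n:ℤ)) := by
        rw [PadicInt.norm_le_pow_iff_mem_span_pow, Ideal.mem_span_singleton]
        exact_mod_cast heq
    _ < r := hn

end Stmt14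

theorem stmt14 (F : Polynomial ℤ_[2]) :
    (∀ x : ℤ_[2], Dense (Set.range fun k : ℕ => (fun t => F.eval t)^[k] x)) ↔
      ∀ g : ZMod (2 ^ 3) → ZMod (2 ^ 3),
        (∀ x : ℤ_[2], g (PadicInt.toZModPow 3 x) = PadicInt.toZModPow 3 (F.eval x)) →
          ∀ a : ZMod (2 ^ 3), Set.range (fun k : ℕ => g^[k] a) = Set.univ := by
  constructor
  · intro hdense g hg a
    have hT3 : Stmt14.Tn F 3 := Stmt14.dense_to_Tn F hdense 3
    have hgeq : g = Stmt14.fm F 3 := by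
      funext b
      obtain ⟨x, rfl⟩ := Stmt14.phi_surj 3 b
      rw [hg, Stmt14.compat]
      rfl
    rw [hgeq]
    exact hT3 a
  · intro hg x
    have hT3 : Stmt14.Tn F 3 := hg (Stmt14.fm F 3) (fun x => Stmt14.compat F 3 x)
    exact Stmt14.Tn_to_dense F (Stmt14.T3_all F hT3) x
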